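/- Let G be a finite simple graph with an orientation of its edges. Every triangle of the signed graph Λ_R(G) that arises from three distinct edges of G sharing a common vertex is positive, i.e., the product of the signs of its three edges in Λ_R(G) equals +1. -/

import Mathlib

open scoped Classical
open scoped Matrix

namespace HelmPaper

variable {V : Type} [Fintype V] [DecidableEq V]

/-- The set of triangles of `G`, i.e. the 3-element cliques of `G`. -/
abbrev Triangle (G : SimpleGraph V) : Type :=
  {s : Finset V // s.card = 3 ∧ G.IsClique (s : Set V)}

/-- An orientation of the edges of `G`: each edge `e` gets a head `e⁺` and a tail `e⁻`. -/
structure Orientation (G : SimpleGraph V) where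
  head : G.edgeSet → V
  tail : G.edgeSet → V
  consistent : ∀ e : G.edgeSet, (e : Sym2 V) = s(head e, tail e)

/-- A cyclic orientation of each triangle of `G`, recorded by a representative ordered
triple of its three vertices. -/
structure TriOrientation (G : SimpleGraph V) where
  fst : Triangle G → V
  snd : Triangle G → V
  trd : Triangle G → V
  consistent : ∀ t : Triangle G, ({fst t, snd t, trd t} : Finset V) = t.val

/-- The edge-vertex incidence matrix `B`. -/
noncomputable def bMat (G : SimpleGraph V) (o : Orientation G) : Matrix G.edgeSet V ℝ :=
  fun e v => if v = o.head e then 1 else if v = o.tail e then -1 else 0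

/-- The oriented edge `e` agrees with the cyclic orientation of the triangle `t`. -/
def Agrees {G : SimpleGraph V} (o : Orientation G) (τ : TriOrientation G)
    (e : G.edgeSet) (t : Triangle G) : Prop :=
  (o.tail e = τ.fst t ∧ o.head e = τ.snd t) ∨
  (o.tail e = τ.snd t ∧ o.head e = τ.trd t) ∨
  (o.tail e = τ.trd t ∧ o.head e = τ.fst t)

/-- The oriented edge `e` disagrees with the cyclic orientation of the triangle `t`. -/
def Disagrees {G : SimpleGraph V} (o : Orientation G) (τ : TriOrientation G)
    (e : G.edgeSet) (t : Triangle G) : Prop :=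
  (o.head e = τ.fst t ∧ o.tail e = τ.snd t) ∨
  (o.head e = τ.snd t ∧ o.tail e = τ.trd t) ∨
  (o.head e = τ.trd t ∧ o.tail e = τ.fst t)

/-- The triangle-edge incidence matrix `C`. -/
noncomputable def cMat (G : SimpleGraph V) (o : Orientation G) (τ : TriOrientation G) :
    Matrix (Triangle G) G.edgeSet ℝ :=
  fun t e => if Agrees o τ e t then 1 else if Disagrees o τ e t then -1 else 0

/-- The Helmholtzian matrix `H(G) = B Bᵀ + Cᵀ C`. -/
noncomputable def helm (G : SimpleGraph V) (o : Orientation G) (τ : TriOrientation G) :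
    Matrix G.edgeSet G.edgeSet ℝ :=
  bMat G o * (bMat G o)ᵀ + (cMat G o τ)ᵀ * cMat G o τ

/-- The edge `e` (as an unordered pair of vertices) lies in the triangle `t`. -/
def EdgeInTri (G : SimpleGraph V) (e : Sym2 V) (t : Triangle G) : Prop :=
  ∀ v ∈ e, v ∈ t.val

/-- The triangle degree `△(e)`: the number of triangles of `G` containing the edge `e`. -/
noncomputable def triDeg (G : SimpleGraph V) (e : Sym2 V) : ℕ :=
  (Finset.univ.filter fun t : Triangle G => EdgeInTri G e t).card

/-- The underlying graph of the signed graph `Λ_R(G)`: its vertices are the edges of `G`,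
and two distinct edges of `G` are adjacent when they share an endpoint and lie in no
common triangle of `G` (this underlying adjacency does not depend on the orientation). -/
def lambdaR (G : SimpleGraph V) : SimpleGraph G.edgeSet where
  Adj e e' := e ≠ e' ∧ (∃ v : V, v ∈ (e : Sym2 V) ∧ v ∈ (e' : Sym2 V)) ∧
    ¬∃ t : Triangle G, EdgeInTri G (e : Sym2 V) t ∧ EdgeInTri G (e' : Sym2 V) t
  symm := by
    constructor
    rintro e e' ⟨h₁, ⟨v, hv₁, hv₂⟩, h₃⟩
    exact ⟨h₁.symm, ⟨v, hv₂, hv₁⟩, fun ⟨t, ht₁, ht₂⟩ => h₃ ⟨t, ht₂, ht₁⟩⟩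
  loopless := by constructor; rintro e ⟨h, _⟩; exact h rfl

/-- The sign of the edge `{e, e'}` of the signed graph `Λ_R(G)`: `+1` if `e⁺ = e'⁺` or
`e⁻ = e'⁻` (and no common triangle), `-1` if `e⁺ = e'⁻` or `e⁻ = e'⁺` (and no common
triangle), and `0` if `e` and `e'` are not adjacent in `Λ_R(G)`. -/
noncomputable def lamSign (G : SimpleGraph V) (o : Orientation G) (e e' : G.edgeSet) : ℝ :=
  if (o.head e = o.head e' ∨ o.tail e = o.tail e') ∧
      ¬∃ t : Triangle G, EdgeInTri G (e : Sym2 V) t ∧ EdgeInTri G (e' : Sym2 V) t then 1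
  else if (o.head e = o.tail e' ∨ o.tail e = o.head e') ∧
      ¬∃ t : Triangle G, EdgeInTri G (e : Sym2 V) t ∧ EdgeInTri G (e' : Sym2 V) t then -1
  else 0

lemma head_ne_tail {G : SimpleGraph V} (o : Orientation G) (e : G.edgeSet) :
    o.head e ≠ o.tail e := by
  intro heq
  have h := e.2
  rw [o.consistent e, heq] at h
  exact G.not_isDiag_of_mem_edgeSet h (Sym2.mk_isDiag_iff.mpr rfl)

lemma lamSign_eq {G : SimpleGraph V} (o : Orientation G) (v : V) (e e' : G.edgeSet)
    (hv : v ∈ (e : Sym2 V)) (hv' : v ∈ (e' : Sym2 V))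
    (hnt : ¬∃ t : Triangle G, EdgeInTri G (e : Sym2 V) t ∧ EdgeInTri G (e' : Sym2 V) t) :
    lamSign G o e e' =
      (if o.head e = v then (1 : ℝ) else -1) * (if o.head e' = v then (1 : ℝ) else -1) := by
  have hne := head_ne_tail o e
  have hne' := head_ne_tail o e'
  rw [o.consistent e, Sym2.mem_iff] at hv
  rw [o.consistent e', Sym2.mem_iff] at hv'
  unfold lamSign
  rcases hv with hv | hv <;> rcases hv' with hv' | hv'
  · rw [if_pos ⟨Or.inl (hv.symm.trans hv'), hnt⟩, if_pos hv.symm, if_pos hv'.symm]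
    norm_num
  · rw [if_neg, if_pos ⟨Or.inl (hv.symm.trans hv'), hnt⟩, if_pos hv.symm,
      if_neg (fun h => hne' (h.trans hv'))]
    · norm_num
    · rintro ⟨h | h, -⟩
      · exact hne' ((hv.trans h).symm.trans hv')
      · exact hne ((h.trans hv'.symm).trans hv).symm
  · rw [if_neg, if_pos ⟨Or.inr (hv.symm.trans hv'), hnt⟩,
      if_neg (fun h => hne (h.trans hv)), if_pos hv'.symm]
    · norm_num
    · rintro ⟨h | h, -⟩
      · exact hne ((h.trans hv'.symm).trans hv)
      · exact hne' (hv'.symm.trans (h.symm.trans hv.symm).symm)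
  · rw [if_pos ⟨Or.inr (hv.symm.trans hv'), hnt⟩,
      if_neg (fun h => hne (h.trans hv)), if_neg (fun h => hne' (h.trans hv'))]
    norm_num

/-- Every triangle of `Λ_R(G)` arising from three distinct edges of `G`
sharing a common vertex is positive: the product of the signs of its three edges is `+1`. -/
theorem statement10 (G : SimpleGraph V) (o : Orientation G)
    (e₁ e₂ e₃ : G.edgeSet) (h₁₂ : e₁ ≠ e₂) (h₁₃ : e₁ ≠ e₃) (h₂₃ : e₂ ≠ e₃)
    (v : V) (hv₁ : v ∈ (e₁ : Sym2 V)) (hv₂ : v ∈ (e₂ : Sym2 V)) (hv₃ : v ∈ (e₃ : Sym2 V))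
    (ha₁₂ : (lambdaR G).Adj e₁ e₂) (ha₁₃ : (lambdaR G).Adj e₁ e₃)
    (ha₂₃ : (lambdaR G).Adj e₂ e₃) :
    lamSign G o e₁ e₂ * lamSign G o e₂ e₃ * lamSign G o e₁ e₃ = 1 := by
  rw [lamSign_eq o v e₁ e₂ hv₁ hv₂ ha₁₂.2.2, lamSign_eq o v e₂ e₃ hv₂ hv₃ ha₂₃.2.2,
    lamSign_eq o v e₁ e₃ hv₁ hv₃ ha₁₃.2.2]
  split_ifs <;> norm_num

end HelmPaper
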